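/- An allocation X maximizes social welfare among all reassignments of its bundles to agents (i.e., Σ_i v_i(X_{σ(i)}) ≤ Σ_i v_i(X_i) for every permutation σ) if and only if the envy graph of X contains no directed cycle of positive total weight. -/

import Mathlib

/-- Total weight of a walk (list of vertices) under edge weights `w`. -/
def walkWeight {V : Type*} (w : V → V → ℝ) : List V → ℝ
  | [] => 0
  | [_] => 0
  | a :: b :: l => w a b + walkWeight w (b :: l)

theorem walkWeight_eq_zip_sum {V : Type*} (w : V → V → ℝ) :
    ∀ M : List V, walkWeight w M = ((M.zip M.tail).map fun p => w p.1 p.2).sum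
  | [] => by simp [walkWeight]
  | [a] => by simp [walkWeight]
  | a :: b :: l => by
    rw [walkWeight, walkWeight_eq_zip_sum w (b :: l)]
    simp

/-- Bridging lemma: the weight of a closed walk around a nodup list equals the
sum over its elements of the weight to the `formPerm` image. -/
theorem walkWeight_cycle_eq {V : Type*} [DecidableEq V] (w : V → V → ℝ)
    (x : V) (l : List V) (hL : (x :: l).Nodup) :
    walkWeight w ((x :: l) ++ [x]) = ∑ i ∈ (x :: l).toFinset, w i ((x :: l).formPerm i) := by
  rw [List.sum_toFinset _ hL, walkWeight_eq_zip_sum]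
  have htail : ((x :: l) ++ [x]).tail = l ++ [x] := by simp
  rw [htail]
  congr 1
  apply List.ext_getElem
  · simp [Nat.min_def]
  · intro i h1 h2
    simp only [List.getElem_map, List.getElem_zip]
    have hil : i < (x :: l).length := by simpa using h2
    have hil2 : i < l.length + 1 := by simpa using hil
    have happend : ((x :: l) ++ [x])[i]'(by simp; omega) = (x :: l)[i] :=
      List.getElem_append_left hil
    rw [happend, List.formPerm_apply_getElem _ hL i hil]
    congr 1
    by_cases hc : i < l.length
    · have hmod : (i + 1) % (x :: l).length = i + 1 := by
        apply Nat.mod_eq_of_lt; simp; omega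
      have hleft : (l ++ [x])[i]'(by simp; omega) = l[i] := List.getElem_append_left hc
      simp only [hmod, hleft, List.getElem_cons_succ]
    · have hi : i = l.length := by simp at hil; omega
      have hmod : (i + 1) % (x :: l).length = 0 := by simp [hi]
      have hright : (l ++ [x])[i]'(by simp; omega) = x := by
        rw [List.getElem_append_right (by omega)]
        simp [hi]
      simp only [hmod, hright, List.getElem_cons_zero]

/-- An allocation (with `v i j` the value of agent `i` for bundle `j`)
maximizes social welfare among all reassignments of its bundles iff its envy
graph contains no directed cycle of positive total weight. -/
theorem stmt3 {n : ℕ} (v : Fin n → Fin n → ℝ) :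
    (∀ σ : Equiv.Perm (Fin n), ∑ i, v i (σ i) ≤ ∑ i, v i i) ↔
    (∀ (a : Fin n) (l : List (Fin n)), (a :: l).Nodup →
      walkWeight (fun i j => v i j - v i i) (a :: (l ++ [a])) ≤ 0) := by
  set w : Fin n → Fin n → ℝ := fun i j => v i j - v i i with hw
  have hwsum : ∀ σ : Equiv.Perm (Fin n),
      ∑ i, w i (σ i) = (∑ i, v i (σ i)) - ∑ i, v i i := by
    intro σ
    simp only [hw]
    rw [Finset.sum_sub_distrib]
  constructor
  · intro h a l hnd
    set σ := (a :: l).formPerm with hσ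
    have h1 : (a :: (l ++ [a])) = (a :: l) ++ [a] := by simp
    rw [h1, walkWeight_cycle_eq w a l hnd]
    have h2 : ∑ i ∈ (a :: l).toFinset, w i (σ i) = ∑ i, w i (σ i) := by
      apply Finset.sum_subset (Finset.subset_univ _)
      intro x _ hx
      rw [List.mem_toFinset] at hx
      have : σ x = x := List.formPerm_apply_of_notMem hx
      simp [hw, this]
    rw [h2, hwsum σ]
    have := h σ
    linarith
  · intro h σ
    suffices hs : ∀ (k : ℕ) (σ : Equiv.Perm (Fin n)), σ.support.card = k →
        ∑ i, w i (σ i) ≤ 0 by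
      have := hs σ.support.card σ rfl
      rw [hwsum σ] at this
      linarith
    intro k
    induction k using Nat.strong_induction_on with
    | _ k ih =>
    intro σ hcard
    rcases Finset.eq_empty_or_nonempty σ.support with hemp | ⟨a, ha⟩
    · have : σ = 1 := Equiv.Perm.support_eq_empty_iff.mp hemp
      simp [this, hw]
    · have hLne : σ.toList a ≠ [] := fun hc => (Equiv.Perm.toList_eq_nil_iff.mp hc) ha
      have hpos : 0 < (σ.toList a).length :=
        Equiv.Perm.length_toList_pos_of_mem_support _ _ ha
      obtain ⟨t, ht⟩ : ∃ t, σ.toList a = a :: t := by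
        refine ⟨(σ.toList a).tail, ?_⟩
        have hhead : (σ.toList a).head hLne = a := by
          have h0 : (σ.toList a)[0]'hpos = a := Equiv.Perm.toList_getElem_zero (p := σ) (x := a) ha
          rw [List.head_eq_getElem_zero hLne]
          simpa using h0
        conv_lhs => rw [← List.cons_head_tail hLne, hhead]
      have hnd : (a :: t).Nodup := ht ▸ Equiv.Perm.nodup_toList σ a
      have hmem : ∀ x, x ∈ (a :: t) ↔ σ.SameCycle a x := by
        intro x
        rw [← ht, Equiv.Perm.mem_toList_iff]
        exact ⟨fun h => h.1, fun h => ⟨h, ha⟩⟩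
      have hform : (a :: t).formPerm = σ.cycleOf a := ht ▸ Equiv.Perm.formPerm_toList σ a
      -- cycle weight ≤ 0
      have hcyc : ∑ i ∈ (a :: t).toFinset, w i (σ i) ≤ 0 := by
        have heq : ∑ i ∈ (a :: t).toFinset, w i (σ i)
            = ∑ i ∈ (a :: t).toFinset, w i ((a :: t).formPerm i) := by
          apply Finset.sum_congr rfl
          intro x hx
          rw [List.mem_toFinset, hmem] at hx
          rw [hform, hx.cycleOf_apply]
        rw [heq, ← walkWeight_cycle_eq w a t hnd]
        have h1 : (a :: t) ++ [a] = a :: (t ++ [a]) := by simp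
        rw [h1]
        exact h a t hnd
      -- the reduced permutation
      set τ := σ * (σ.cycleOf a)⁻¹ with hτ
      have hτ_same : ∀ x, σ.SameCycle a x → τ x = x := by
        intro x hx
        have : (σ.cycleOf a)⁻¹ x = σ⁻¹ x := by
          rw [Equiv.Perm.cycleOf_inv]
          exact (Equiv.Perm.SameCycle.cycleOf_apply (by rwa [Equiv.Perm.sameCycle_inv]))
        simp [hτ, Equiv.Perm.mul_apply, this]
      have hτ_not : ∀ x, ¬ σ.SameCycle a x → τ x = σ x := by
        intro x hx
        have : (σ.cycleOf a)⁻¹ x = x := by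
          rw [Equiv.Perm.cycleOf_inv]
          exact Equiv.Perm.cycleOf_apply_of_not_sameCycle
            (by rwa [Equiv.Perm.sameCycle_inv])
        simp [hτ, Equiv.Perm.mul_apply, this]
      have hsub : τ.support ⊆ σ.support \ {a} := by
        intro x hx
        rw [Equiv.Perm.mem_support] at hx
        by_cases hc : σ.SameCycle a x
        · exact absurd (hτ_same x hc) hx
        · rw [hτ_not x hc] at hx
          refine Finset.mem_sdiff.mpr ⟨Equiv.Perm.mem_support.mpr hx, ?_⟩
          simp only [Finset.mem_singleton]
          rintro rfl
          exact hc (Equiv.Perm.SameCycle.refl _ _)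
      have hlt : τ.support.card < k := by
        calc τ.support.card ≤ (σ.support \ {a}).card := Finset.card_le_card hsub
          _ < σ.support.card := by
              apply Finset.card_lt_card
              constructor
              · exact Finset.sdiff_subset
              · intro hc
                have := hc ha
                simp at this
          _ = k := hcard
      have hτle : ∑ i, w i (τ i) ≤ 0 := ih _ hlt τ rfl
      -- combine
      have hsplit : ∑ i, w i (σ i) =
          (∑ i ∈ (a :: t).toFinset, w i (σ i)) + ∑ i ∈ (a :: t).toFinsetᶜ, w i (σ i) := by
        rw [Finset.sum_add_sum_compl]
      have hτsplit : ∑ i, w i (τ i) =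
          (∑ i ∈ (a :: t).toFinset, w i (τ i)) + ∑ i ∈ (a :: t).toFinsetᶜ, w i (τ i) := by
        rw [Finset.sum_add_sum_compl]
      have h1 : ∑ i ∈ (a :: t).toFinset, w i (τ i) = 0 := by
        apply Finset.sum_eq_zero
        intro x hx
        rw [List.mem_toFinset, hmem] at hx
        simp [hw, hτ_same x hx]
      have h2 : ∑ i ∈ (a :: t).toFinsetᶜ, w i (σ i) = ∑ i ∈ (a :: t).toFinsetᶜ, w i (τ i) := by
        apply Finset.sum_congr rfl
        intro x hx
        rw [Finset.mem_compl, List.mem_toFinset, hmem] at hx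
        rw [hτ_not x hx]
      rw [hsplit, h2]
      have : ∑ i ∈ (a :: t).toFinsetᶜ, w i (τ i) ≤ 0 := by
        rw [hτsplit, h1] at hτle
        linarith
      linarith
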